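/- Let I be an interval and let ξ, η : I → ℝ be differentiable functions satisfying ξ'(t) = η(t) and η'(t) = ξ(t)·(3η(t) − ξ(t)² − 1) for all t ∈ I, and suppose θ(t) = ξ(t)² + 1 − η(t) ≠ 0 for all t ∈ I. Then the function κ(t) = (ξ(t)² + 1 − 2η(t))/θ(t)² is constant on I. -/

import Mathlib

/-- For solutions of `ξ' = η`, `η' = ξ(3η - ξ² - 1)` on an interval `I` with
`θ = ξ² + 1 - η ≠ 0` on `I`, the quantity `κ = (ξ² + 1 - 2η)/θ²` is constant on `I`. -/
theorem stmt_10 (I : Set ℝ) (hI : I.OrdConnected) (ξ η : ℝ → ℝ)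
    (hξ : ∀ t ∈ I, HasDerivWithinAt ξ (η t) I t)
    (hη : ∀ t ∈ I, HasDerivWithinAt η (ξ t * (3 * η t - (ξ t) ^ 2 - 1)) I t)
    (hθ : ∀ t ∈ I, (ξ t) ^ 2 + 1 - η t ≠ 0) :
    ∀ s ∈ I, ∀ t ∈ I,
      ((ξ s) ^ 2 + 1 - 2 * η s) / ((ξ s) ^ 2 + 1 - η s) ^ 2 =
        ((ξ t) ^ 2 + 1 - 2 * η t) / ((ξ t) ^ 2 + 1 - η t) ^ 2 := by
  have hconv : Convex ℝ I := convex_iff_ordConnected.mpr hI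
  set κ : ℝ → ℝ := fun t => ((ξ t) ^ 2 + 1 - 2 * η t) / ((ξ t) ^ 2 + 1 - η t) ^ 2 with hκ
  have hderiv : ∀ t ∈ I, HasDerivWithinAt κ 0 I t := by
    intro t ht
    have hnum : HasDerivWithinAt (fun t => (ξ t) ^ 2 + 1 - 2 * η t)
        (2 * ξ t * η t - 2 * (ξ t * (3 * η t - (ξ t) ^ 2 - 1))) I t := by
      have := (((hξ t ht).pow 2).add_const 1).sub ((hη t ht).const_mul 2)
      simpa [mul_comm, mul_assoc, mul_left_comm, Pi.sub_def] using this
    have hden : HasDerivWithinAt (fun t => ((ξ t) ^ 2 + 1 - η t) ^ 2)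
        (2 * ((ξ t) ^ 2 + 1 - η t) * (2 * ξ t * η t - ξ t * (3 * η t - (ξ t) ^ 2 - 1))) I t := by
      have h1 : HasDerivWithinAt (fun t => (ξ t) ^ 2 + 1 - η t)
          (2 * ξ t * η t - ξ t * (3 * η t - (ξ t) ^ 2 - 1)) I t := by
        have := (((hξ t ht).pow 2).add_const 1).sub (hη t ht)
        simpa [mul_comm, mul_assoc, mul_left_comm, Pi.sub_def] using this
      have := h1.pow 2
      simpa [mul_comm, mul_assoc, mul_left_comm, Pi.pow_def] using this
    have hd := hnum.div hden (pow_ne_zero 2 (hθ t ht))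
    refine hd.congr_deriv ?_
    rw [div_eq_zero_iff]
    left
    ring
  intro s hs t ht
  have key := Convex.norm_image_sub_le_of_norm_hasFDerivWithin_le
    (f' := fun _ : ℝ => ContinuousLinearMap.smulRight (1 : ℝ →L[ℝ] ℝ) (0 : ℝ)) (C := 0)
    (fun x hx => (hderiv x hx).hasFDerivWithinAt) (fun x _ => by simp) hconv ht hs
  have : ‖κ s - κ t‖ ≤ 0 := by simpa using key
  have : κ s = κ t := by
    have := le_antisymm this (norm_nonneg _)
    simpa [sub_eq_zero] using norm_eq_zero.mp this
  simpa [hκ] using this
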